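/- The coverage measure of a configuration where one nearest-neighbor distance is ε and the remaining n−1 equal 1 tends to sqrt(n−1) as ε → 0⁺; hence the bound λ ≤ sqrt(n−1) is asymptotically sharp at the level of the distance profile. -/

import Mathlib

open Finset Real Filter

/-- Mean of a profile of nearest-neighbor distances. -/
noncomputable def profMean {n : ℕ} (g : Fin n → ℝ) : ℝ := (∑ i, g i) / n

/-- Coverage measure built from a profile of nearest-neighbor distances. -/
noncomputable def profCov {n : ℕ} (g : Fin n → ℝ) : ℝ :=
  Real.sqrt ((∑ i, (g i - profMean g) ^ 2) / n) / profMean g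

lemma sum_ite_head {n : ℕ} (hn : 1 ≤ n) (a b : ℝ) :
    (∑ i : Fin n, (if (i : ℕ) = 0 then a else b)) = a + ((n : ℝ) - 1) * b := by
  obtain ⟨m, rfl⟩ := Nat.exists_eq_add_of_le hn
  rw [add_comm 1 m, Fin.sum_univ_succ]
  simp [Fin.val_succ]

/-- for the profile `(ε, 1, …, 1)` of one small and `n − 1`
unit nearest-neighbor distances, `λ(ε) → 1/√(n−1)` as `ε → 0⁺`. -/
theorem coverage_profile_limit {n : ℕ} (hn : 2 ≤ n) :
    Tendsto (fun ε : ℝ =>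
        profCov (fun i : Fin n => if (i : ℕ) = 0 then ε else 1))
      (nhdsWithin 0 (Set.Ioi 0))
      (nhds (1 / Real.sqrt ((n : ℝ) - 1))) := by
  have hn1 : 1 ≤ n := le_trans (by norm_num) hn
  have hN : (2 : ℝ) ≤ (n : ℝ) := by exact_mod_cast hn
  have hNpos : (0 : ℝ) < n := by linarith
  have hN1pos : (0 : ℝ) < (n : ℝ) - 1 := by linarith
  set F : ℝ → ℝ := fun ε =>
    Real.sqrt (((ε - (ε + ((n : ℝ) - 1)) / n) ^ 2 +
        ((n : ℝ) - 1) * (1 - (ε + ((n : ℝ) - 1)) / n) ^ 2) / n) /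
      ((ε + ((n : ℝ) - 1)) / n) with hF
  have heq : ∀ ε : ℝ,
      profCov (fun i : Fin n => if (i : ℕ) = 0 then ε else 1) = F ε := by
    intro ε
    have hmean : profMean (fun i : Fin n => if (i : ℕ) = 0 then ε else 1)
        = (ε + ((n : ℝ) - 1)) / n := by
      unfold profMean
      rw [sum_ite_head hn1]
      ring_nf
    unfold profCov
    rw [hmean]
    congr 2
    have : ∀ i : Fin n,
        ((if (i : ℕ) = 0 then ε else 1) - (ε + ((n : ℝ) - 1)) / n) ^ 2
        = (if (i : ℕ) = 0 then (ε - (ε + ((n : ℝ) - 1)) / n) ^ 2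
            else (1 - (ε + ((n : ℝ) - 1)) / n) ^ 2) := by
      intro i; split <;> rfl
    rw [Finset.sum_congr rfl (fun i _ => this i), sum_ite_head hn1]
  have hcont : ContinuousAt F 0 := by
    apply ContinuousAt.div
    · apply Real.continuous_sqrt.continuousAt.comp
      fun_prop
    · fun_prop
    · simp
      constructor
      · linarith
      · positivity
  have hval : F 0 = 1 / Real.sqrt ((n : ℝ) - 1) := by
    have h1 : ((0 : ℝ) - ((0 : ℝ) + ((n : ℝ) - 1)) / n) ^ 2 +
        ((n : ℝ) - 1) * (1 - ((0 : ℝ) + ((n : ℝ) - 1)) / n) ^ 2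
        = ((n : ℝ) - 1) / n := by
      field_simp
      ring
    rw [hF]
    simp only [h1]
    rw [div_div]
    have hs : 0 < Real.sqrt ((n : ℝ) - 1) := Real.sqrt_pos.mpr hN1pos
    have hs2 : Real.sqrt ((n : ℝ) - 1) * Real.sqrt ((n : ℝ) - 1) = (n : ℝ) - 1 :=
      Real.mul_self_sqrt hN1pos.le
    have h3 : Real.sqrt (((n : ℝ) - 1) / (n * n)) = Real.sqrt ((n : ℝ) - 1) / n := by
      rw [Real.sqrt_div hN1pos.le, Real.sqrt_mul_self hNpos.le]
    rw [h3, zero_add]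
    field_simp
    rw [sq, hs2]
  rw [show (fun ε : ℝ =>
      profCov (fun i : Fin n => if (i : ℕ) = 0 then ε else 1)) = F from funext heq,
    ← hval]
  exact hcont.continuousWithinAt.tendsto
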